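/- Let A = (Q, A, δ) be a synchronizing DFA such that |Q| is prime and there exists a subset B ⊆ A such that every letter of B acts as a permutation of Q and the monoid generated by B acts transitively on Q. Then A is simple, i.e., the only automata congruences on A are the identity relation and the universal relation. -/

import Mathlib

/-- The action of a DFA transition function on words. -/
def dfaRun {Q A : Type*} (δ : Q → A → Q) (q : Q) (u : List A) : Q := u.foldl δ q

/-- A synchronizing DFA with a prime number of states, on which a subset `B` of letters acts
by permutations and transitively, is simple: its only automata congruences are the identity
relation and the universal relation. -/
theorem stmt4 {Q A : Type*} [Fintype Q] [DecidableEq Q] (δ : Q → A → Q)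
    (hsync : ∃ u : List A, (Finset.univ.image fun q => dfaRun δ q u).card = 1)
    (hprime : Nat.Prime (Fintype.card Q))
    (B : Set A)
    (hperm : ∀ b ∈ B, Function.Bijective fun q => δ q b)
    (htrans : ∀ p q : Q, ∃ u : List A, (∀ a ∈ u, a ∈ B) ∧ dfaRun δ p u = q) :
    ∀ r : Q → Q → Prop, Equivalence r → (∀ p q, r p q → ∀ a, r (δ p a) (δ q a)) →
      (∀ p q, r p q ↔ p = q) ∨ (∀ p q, r p q) := by
  classical
  intro r hequiv hcong
  -- the size of the equivalence class of q
  set g : Q → ℕ := fun q => (Finset.univ.filter (fun p => r p q)).card with hg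
  -- each letter of B preserves class size
  have key : ∀ b ∈ B, ∀ q, g (δ q b) = g q := by
    intro b hb
    have hbij := hperm b hb
    set e : Equiv.Perm Q := Equiv.ofBijective _ hbij with he
    have heq : ∀ q, e q = δ q b := fun q => rfl
    have step : ∀ q, g q ≤ g (e q) := by
      intro q
      have hsub : (Finset.univ.filter (fun p => r p q)).image (fun p => δ p b)
          ⊆ Finset.univ.filter (fun p => r p (δ q b)) := by
        intro x hx
        simp only [Finset.mem_image, Finset.mem_filter, Finset.mem_univ, true_and] at hx ⊢
        obtain ⟨p, hp, rfl⟩ := hx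
        exact hcong p q hp b
      calc g q = ((Finset.univ.filter (fun p => r p q)).image (fun p => δ p b)).card :=
            (Finset.card_image_of_injective _ hbij.injective).symm
        _ ≤ _ := Finset.card_le_card hsub
        _ = g (e q) := by rw [heq]
    have pow_le : ∀ m q, g q ≤ g ((e ^ m) q) := by
      intro m
      induction m with
      | zero => intro q; simp
      | succ m ih =>
        intro q
        have h1 : (e ^ (m + 1)) q = (e ^ m) (e q) := by
          rw [pow_succ]; rfl
        rw [h1]
        exact (step q).trans (ih (e q))
    have hpos : 0 < orderOf e := orderOf_pos e
    have horder : e ^ (orderOf e) = 1 := pow_orderOf_eq_one e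
    intro q
    have h1 : g q ≤ g (e q) := step q
    obtain ⟨m, hm⟩ : ∃ m, orderOf e = m + 1 :=
      ⟨orderOf e - 1, (Nat.succ_pred_eq_of_pos hpos).symm⟩
    have h2 : g (e q) ≤ g q := by
      have := pow_le m (e q)
      have h3 : (e ^ m) (e q) = (e ^ (m + 1)) q := by rw [pow_succ]; rfl
      rw [h3, ← hm, horder] at this
      simpa using this
    rw [← heq]
    exact le_antisymm h2 h1
  -- words over B preserve class size
  have keyword : ∀ u : List A, (∀ a ∈ u, a ∈ B) → ∀ q, g (dfaRun δ q u) = g q := by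
    intro u
    induction u with
    | nil => intro _ q; rfl
    | cons a u ih =>
      intro h q
      have h1 : dfaRun δ q (a :: u) = dfaRun δ (δ q a) u := rfl
      rw [h1, ih (fun x hx => h x (List.mem_cons_of_mem a hx)),
        key a (h a List.mem_cons_self) q]
  -- all classes have the same size
  have hconst : ∀ p q : Q, g p = g q := by
    intro p q
    obtain ⟨u, hu, hru⟩ := htrans p q
    rw [← hru, keyword u hu p]
  have hpos0 : 0 < Fintype.card Q := hprime.pos
  obtain ⟨q0⟩ := Fintype.card_pos_iff.mp hpos0
  set d := g q0 with hd
  have hgd : ∀ q, g q = d := fun q => hconst q q0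
  -- d divides the number of states
  have hdvd : d ∣ Fintype.card Q := by
    set s : Setoid Q := ⟨r, hequiv⟩ with hs
    have : Finite (Quotient s) := Quotient.finite _
    have : Fintype (Quotient s) := Fintype.ofFinite _
    have hcard : (Finset.univ : Finset Q).card =
        ∑ b : Quotient s, ((Finset.univ : Finset Q).filter
          (fun a => Quotient.mk s a = b)).card :=
      Finset.card_eq_sum_card_fiberwise (fun x _ => Finset.mem_univ _)
    have hfib : ∀ b : Quotient s, ((Finset.univ : Finset Q).filter
        (fun a => Quotient.mk s a = b)).card = d := by
      intro b
      obtain ⟨q, rfl⟩ := Quotient.exists_rep b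
      have hfil : ((Finset.univ : Finset Q).filter (fun a => Quotient.mk s a = Quotient.mk s q))
          = (Finset.univ : Finset Q).filter (fun a => r a q) := by
        apply Finset.filter_congr
        intro x _
        simp only [Quotient.eq]
        rfl
      rw [hfil]
      exact hgd q
    rw [Finset.card_univ] at hcard
    rw [hcard]
    simp only [hfib, Finset.sum_const, Finset.card_univ, smul_eq_mul]
    exact Dvd.intro_left _ rfl
  rcases (Nat.Prime.eq_one_or_self_of_dvd hprime d hdvd) with h1 | h1
  · left
    intro p q
    constructor
    · intro hpq
      have hcard1 : ((Finset.univ : Finset Q).filter (fun x => r x q)).card = 1 := by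
        rw [← h1]; exact hgd q
      have hple : ((Finset.univ : Finset Q).filter (fun x => r x q)).card ≤ 1 := hcard1.le
      have hp : p ∈ (Finset.univ : Finset Q).filter (fun x => r x q) := by
        simp only [Finset.mem_filter, Finset.mem_univ, true_and]; exact hpq
      have hq : q ∈ (Finset.univ : Finset Q).filter (fun x => r x q) := by
        simp only [Finset.mem_filter, Finset.mem_univ, true_and]; exact hequiv.refl q
      exact Finset.card_le_one.mp hple p hp q hq
    · rintro rfl; exact hequiv.refl p
  · right
    intro p q
    have hcard1 : ((Finset.univ : Finset Q).filter (fun x => r x q)).card = Fintype.card Q := by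
      rw [← h1]; exact hgd q
    have : (Finset.univ : Finset Q).filter (fun x => r x q) = Finset.univ := by
      apply Finset.eq_univ_of_card
      rw [hcard1]
    have hp : p ∈ (Finset.univ : Finset Q).filter (fun x => r x q) := by
      rw [this]; exact Finset.mem_univ p
    simpa using hp
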